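/- Let q be a prime and let n, t, T be natural numbers. Then there exists a multivariate polynomial P in n variables over ℤ_q of total degree at most q^t − 1 such that for every Boolean vector a ∈ {0,1}^n, P(a) ∈ {0,1} in ℤ_q, and P(a) = 0 in ℤ_q if and only if |a|₁ ≡ T (mod q^t). -/

import Mathlib

open MvPolynomial Finset

lemma aux_choose_digit (q : ℕ) [hq : Fact q.Prime] (m i : ℕ) :
    (m.choose (q ^ i) : ZMod q) = ((m / q ^ i % q : ℕ) : ZMod q) := by
  have h2 : 2 ≤ q := hq.out.two_le
  have h := Choose.choose_modEq_choose_mul_prod_range_choose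
    (p := q) (n := m) (k := q ^ i) (i + 1)
  have hZ : ((m.choose (q ^ i) : ℤ) : ZMod q) =
      (((m / q ^ (i+1)).choose (q ^ i / q ^ (i+1)) *
        ∏ j ∈ range (i+1), (m / q ^ j % q).choose (q ^ i / q ^ j % q) : ℤ) : ZMod q) := by
    exact_mod_cast (ZMod.intCast_eq_intCast_iff _ _ _).mpr h
  have hd0 : q ^ i / q ^ (i + 1) = 0 :=
    Nat.div_eq_of_lt (Nat.pow_lt_pow_right (by omega) (Nat.lt_succ_self i))
  have hlast : q ^ i / q ^ i % q = 1 := by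
    rw [Nat.div_self (pow_pos (by omega : 0 < q) i)]
    exact Nat.one_mod_eq_one.mpr (by omega)
  have hrest : ∀ j ∈ range i, (m / q ^ j % q).choose (q ^ i / q ^ j % q) = 1 := by
    intro j hj
    rw [mem_range] at hj
    have hz : q ^ i / q ^ j % q = 0 := by
      rw [Nat.pow_div hj.le (by omega)]
      exact Nat.mod_eq_zero_of_dvd (dvd_pow_self q (by omega))
    rw [hz, Nat.choose_zero_right]
  rw [hd0, Nat.choose_zero_right, prod_range_succ, hlast, Nat.choose_one_right,
    prod_eq_one hrest] at hZ
  rw [ZMod.natCast_mod]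
  push_cast at hZ
  simp only [one_mul] at hZ
  exact_mod_cast hZ

lemma aux_digits_iff (q : ℕ) (h2 : 2 ≤ q) (t s T : ℕ) :
    Nat.ModEq (q ^ t) s T ↔ ∀ i < t, s / q ^ i % q = T / q ^ i % q := by
  induction t with
  | zero => simp [Nat.ModEq, Nat.mod_one]
  | succ t ih =>
    constructor
    · intro h i hi
      have h' : s % q ^ (i + 1) = T % q ^ (i + 1) :=
        (Nat.ModEq.of_dvd (pow_dvd_pow q hi) h : _)
      rw [← Nat.mod_mul_right_div_self, ← Nat.mod_mul_right_div_self, ← pow_succ, h']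
    · intro h
      have h1 : s % q ^ t = T % q ^ t := ih.mpr fun i hi => h i (hi.trans (Nat.lt_succ_self t))
      have h2' : s / q ^ t % q = T / q ^ t % q := h t (Nat.lt_succ_self t)
      show s % q ^ (t + 1) = T % q ^ (t + 1)
      rw [pow_succ, Nat.mod_mul, Nat.mod_mul, h1, h2']

lemma aux_eval_esymm (q n k : ℕ) (a : Fin n → Bool) :
    MvPolynomial.eval (fun j => if a j then (1 : ZMod q) else 0)
      (esymm (Fin n) (ZMod q) k)
      = ((Finset.univ.filter fun j => a j = true).card.choose k : ZMod q) := by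
  classical
  set S := Finset.univ.filter fun j : Fin n => a j = true with hS
  rw [esymm, map_sum]
  have hterm : ∀ u ∈ powersetCard k (univ : Finset (Fin n)),
      MvPolynomial.eval (fun j => if a j then (1 : ZMod q) else 0) (∏ i ∈ u, X i)
        = if u ⊆ S then 1 else 0 := by
    intro u hu
    rw [map_prod]
    simp only [eval_X]
    by_cases hsub : u ⊆ S
    · rw [if_pos hsub]
      apply prod_eq_one
      intro i hi
      have : a i = true := (mem_filter.mp (hsub hi)).2
      simp [this]
    · rw [if_neg hsub]
      obtain ⟨i, hiu, hiS⟩ := not_subset.mp hsub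
      have : a i = false := by
        by_contra hf
        exact hiS (mem_filter.mpr ⟨mem_univ i, by simpa using hf⟩)
      exact prod_eq_zero hiu (by simp [this])
  rw [sum_congr rfl hterm, sum_boole]
  have hfilter : (powersetCard k (univ : Finset (Fin n))).filter (· ⊆ S)
      = powersetCard k S := by
    ext u
    simp only [mem_filter, mem_powersetCard]
    exact ⟨fun ⟨⟨_, hc⟩, hsub⟩ => ⟨hsub, hc⟩,
      fun ⟨hsub, hc⟩ => ⟨⟨subset_univ u, hc⟩, hsub⟩⟩
  rw [hfilter, card_powersetCard]

lemma aux_geom (q t : ℕ) (h2 : 2 ≤ q) :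
    ∑ i ∈ range t, (q - 1) * q ^ i = q ^ t - 1 := by
  induction t with
  | zero => simp
  | succ t ih =>
    rw [sum_range_succ, ih, pow_succ, Nat.sub_one_mul, mul_comm (q ^ t) q]
    have h1 : 1 ≤ q ^ t := Nat.one_le_pow _ _ (by omega)
    have h3 : q ^ t ≤ q * q ^ t := Nat.le_mul_of_pos_left _ (by omega)
    omega

theorem exists_modular_counting_polynomial (q : ℕ) (hq : q.Prime) (n t T : ℕ) :
    ∃ P : MvPolynomial (Fin n) (ZMod q),
      P.totalDegree ≤ q ^ t - 1 ∧
      ∀ a : Fin n → Bool,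
        (MvPolynomial.eval (fun k => if a k then (1 : ZMod q) else 0) P = 0 ∨
          MvPolynomial.eval (fun k => if a k then (1 : ZMod q) else 0) P = 1) ∧
        (MvPolynomial.eval (fun k => if a k then (1 : ZMod q) else 0) P = 0 ↔
          Nat.ModEq (q ^ t) (Finset.univ.filter fun k => a k = true).card T) := by
  haveI : Fact q.Prime := ⟨hq⟩
  have h2 : 2 ≤ q := hq.two_le
  haveI : Fact (1 < q) := ⟨h2⟩
  set P : MvPolynomial (Fin n) (ZMod q) :=
    1 - ∏ i ∈ range t,
      (1 - (esymm (Fin n) (ZMod q) (q ^ i) - C ((T.choose (q ^ i) : ZMod q))) ^ (q - 1))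
    with hP
  refine ⟨P, ?_, ?_⟩
  · -- degree bound
    rw [hP]
    refine le_trans (totalDegree_sub _ _) (max_le (by simp) ?_)
    refine le_trans (totalDegree_finset_prod _ _) ?_
    rw [← aux_geom q t h2]
    apply Finset.sum_le_sum
    intro i _
    refine le_trans (totalDegree_sub _ _) (max_le (by simp) ?_)
    refine le_trans (totalDegree_pow _ _) ?_
    apply Nat.mul_le_mul_left
    refine le_trans (totalDegree_sub _ _) (max_le ?_ (by rw [totalDegree_C]; exact Nat.zero_le _))
    rw [esymm]
    refine le_trans (totalDegree_finset_sum _ _) (Finset.sup_le ?_)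
    intro u hu
    refine le_trans (totalDegree_finset_prod _ _) ?_
    calc ∑ j ∈ u, (X j : MvPolynomial (Fin n) (ZMod q)).totalDegree
        ≤ ∑ j ∈ u, 1 := Finset.sum_le_sum fun j _ => (totalDegree_X j).le
      _ = u.card := by simp
      _ = q ^ i := (mem_powersetCard.mp hu).2
  · intro a
    set s := (Finset.univ.filter fun k : Fin n => a k = true).card with hs
    have heval : MvPolynomial.eval (fun k => if a k then (1 : ZMod q) else 0) P
        = 1 - ∏ i ∈ range t,
          (1 - ((s.choose (q ^ i) : ZMod q) - (T.choose (q ^ i) : ZMod q)) ^ (q - 1)) := by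
      rw [hP]
      rw [map_sub, map_one, map_prod]
      congr 1
      apply prod_congr rfl
      intro i _
      rw [map_sub, map_one, map_pow, map_sub, eval_C, aux_eval_esymm]
    by_cases hA : ∀ i < t, s / q ^ i % q = T / q ^ i % q
    · have hprod : (∏ i ∈ range t,
          (1 - ((s.choose (q ^ i) : ZMod q) - (T.choose (q ^ i) : ZMod q)) ^ (q - 1))) = 1 := by
        apply prod_eq_one
        intro i hi
        rw [mem_range] at hi
        have hceq : (s.choose (q ^ i) : ZMod q) = (T.choose (q ^ i) : ZMod q) := by
          rw [aux_choose_digit, aux_choose_digit, hA i hi]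
        rw [hceq, sub_self, zero_pow (by omega), sub_zero]
      rw [heval, hprod, sub_self]
      exact ⟨Or.inl rfl, by simpa using (aux_digits_iff q h2 t s T).mpr hA⟩
    · push_neg at hA
      obtain ⟨i, hi, hne⟩ := hA
      have hfac : (1 - ((s.choose (q ^ i) : ZMod q) - (T.choose (q ^ i) : ZMod q)) ^ (q - 1))
          = 0 := by
        have hu : ((s.choose (q ^ i) : ZMod q) - (T.choose (q ^ i) : ZMod q)) ≠ 0 := by
          rw [aux_choose_digit, aux_choose_digit, sub_ne_zero]
          intro hc
          apply hne
          have hmeq := (ZMod.natCast_eq_natCast_iff _ _ _).mp hc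
          rw [Nat.ModEq, Nat.mod_mod, Nat.mod_mod] at hmeq
          exact hmeq
        rw [ZMod.pow_card_sub_one_eq_one hu, sub_self]
      have hprod : (∏ i ∈ range t,
          (1 - ((s.choose (q ^ i) : ZMod q) - (T.choose (q ^ i) : ZMod q)) ^ (q - 1))) = 0 :=
        prod_eq_zero (mem_range.mpr hi) hfac
      rw [heval, hprod, sub_zero]
      haveI : Fact (1 < q) := ⟨h2⟩
      refine ⟨Or.inr rfl, ?_, ?_⟩
      · intro h; exact absurd h one_ne_zero
      · intro h; exact absurd ((aux_digits_iff q h2 t s T).mp h i hi) hne
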